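/- There is an absolute constant C such that for every even integer n, every real t with |t| ≥ 1, and every real Y with 0 < Y < 1/(2e²), Σ_{k=0}^{∞} |Γ(1/2−it−n/2+k)·Γ(1−2it) / (Γ(1/2−it−n/2)·Γ(1−2it+k))| · Y^k/k! ≤ C · Σ_{k=0}^{∞} (|n|/2+1)^k · Y^k/(k!)². -/

import Mathlib

open Finset

lemma gamma_prod (z : ℂ) (hz : z.im ≠ 0) (k : ℕ) :
    Complex.Gamma (z + k) = (∏ j ∈ Finset.range k, (z + j)) * Complex.Gamma z := by
  induction k with
  | zero => simp
  | succ k ih =>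
    have hzk : z + (k : ℂ) ≠ 0 := by
      intro h
      have := congrArg Complex.im h
      simp at this
      exact hz this
    have h1 : (z + ((k+1 : ℕ) : ℂ)) = (z + k) + 1 := by push_cast; ring
    rw [h1, Complex.Gamma_add_one _ hzk, ih, Finset.prod_range_succ]; ring

lemma prod_range_add_one (k : ℕ) :
    (∏ j ∈ Finset.range k, ((j : ℝ) + 1)) = (Nat.factorial k : ℝ) := by
  induction k with
  | zero => simp
  | succ k ih => rw [Finset.prod_range_succ, ih, Nat.factorial_succ]; push_cast; ring

lemma sum_range_add_one (k : ℕ) :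
    (∑ j ∈ Finset.range k, ((j : ℝ) + 1)) = k * (k + 1) / 2 := by
  induction k with
  | zero => simp
  | succ k ih => rw [Finset.sum_range_succ, ih]; push_cast; ring

lemma pow_succ_le_exp_factorial (k : ℕ) :
    ((k : ℝ) + 1) ^ k ≤ Real.exp 1 ^ k * (Nat.factorial k : ℝ) := by
  induction k with
  | zero => simp
  | succ k ih =>
    have hk1 : (0:ℝ) < (k:ℝ) + 1 := by positivity
    have h1 : ((k:ℝ) + 2) ^ (k+1) ≤ Real.exp 1 * ((k:ℝ) + 1) ^ (k+1) := by
      have h2 : ((k:ℝ) + 2) / ((k:ℝ) + 1) ≤ Real.exp (1/((k:ℝ)+1)) := by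
        have h := Real.add_one_le_exp (1/((k:ℝ)+1))
        have hinv : (1/((k:ℝ)+1))*((k:ℝ)+1) = 1 := by field_simp
        rw [div_le_iff₀ hk1]
        nlinarith [Real.exp_pos (1/((k:ℝ)+1))]
      have h3 : (((k:ℝ) + 2) / ((k:ℝ) + 1)) ^ (k+1) ≤ Real.exp (1/((k:ℝ)+1)) ^ (k+1) := by
        apply pow_le_pow_left₀ (by positivity) h2
      rw [← Real.exp_nat_mul] at h3
      have h4 : ((k:ℕ)+1 : ℝ) * (1/((k:ℝ)+1)) = 1 := by
        field_simp
      rw [div_pow] at h3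
      rw [div_le_iff₀ (by positivity)] at h3
      calc ((k:ℝ) + 2) ^ (k+1) ≤ Real.exp (((k:ℕ)+1 : ℝ) * (1/((k:ℝ)+1))) * ((k:ℝ)+1)^(k+1) := by
            convert h3 using 3; rfl; push_cast; ring
        _ = Real.exp 1 * ((k:ℝ) + 1) ^ (k+1) := by rw [h4]
    have hfin : ((k:ℝ)+2)^(k+1) ≤ Real.exp 1 ^ (k+1) * (Nat.factorial (k+1) : ℝ) := by
      calc ((k:ℝ)+2)^(k+1)
      _ ≤ Real.exp 1 * ((k:ℝ)+1)^(k+1) := h1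
      _ = Real.exp 1 * (((k:ℝ)+1) * ((k:ℝ)+1)^k) := by ring
      _ ≤ Real.exp 1 * (((k:ℝ)+1) * (Real.exp 1 ^ k * (Nat.factorial k : ℝ))) := by
          gcongr
      _ = Real.exp 1 ^ (k+1) * ((Nat.factorial (k+1) : ℝ)) := by
          rw [Nat.factorial_succ]; push_cast; ring
    have hcast : ((k+1:ℕ):ℝ) + 1 = (k:ℝ) + 2 := by push_cast; ring
    rw [hcast]
    exact hfin

lemma im_ne_add_nat {z : ℂ} (hz : z.im ≠ 0) (j : ℕ) : z + (j:ℂ) ≠ 0 := by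
  intro h
  have := congrArg Complex.im h
  simp at this
  exact hz this

lemma gamma_ne_zero_of_im {z : ℂ} (hz : z.im ≠ 0) : Complex.Gamma z ≠ 0 := by
  apply Complex.Gamma_ne_zero
  intro m h
  apply hz
  rw [h]
  simp

lemma abs_gamma_quot (a b : ℂ) (ha : a.im ≠ 0) (hb : b.im ≠ 0) (k : ℕ) :
    norm (Complex.Gamma (a + k) * Complex.Gamma b /
        (Complex.Gamma a * Complex.Gamma (b + k))) =
      ∏ j ∈ Finset.range k, (norm (a + j) / norm (b + j)) := by
  have hGa := gamma_ne_zero_of_im ha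
  have hGb := gamma_ne_zero_of_im hb
  have hPb : (∏ j ∈ Finset.range k, (b + (j:ℂ))) ≠ 0 :=
    Finset.prod_ne_zero_iff.mpr (fun j _ => im_ne_add_nat hb j)
  rw [gamma_prod a ha, gamma_prod b hb]
  have hq : (∏ j ∈ Finset.range k, (a + (j:ℂ))) * Complex.Gamma a * Complex.Gamma b /
      (Complex.Gamma a * ((∏ j ∈ Finset.range k, (b + (j:ℂ))) * Complex.Gamma b)) =
      (∏ j ∈ Finset.range k, (a + (j:ℂ))) / (∏ j ∈ Finset.range k, (b + (j:ℂ))) := by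
    field_simp
  rw [hq]
  rw [norm_div, norm_prod, norm_prod, ← Finset.prod_div_distrib]

lemma div_factor (A D M T jr : ℝ) (hA : A ≤ M + jr + T) (hD1 : jr + 1 ≤ D)
    (hD2 : 2*T ≤ D) (hT : 1 ≤ T) (hM : 1 ≤ M) (hj : 0 ≤ jr) :
    A / D ≤ M/(jr+1) + 3/2 := by
  have hj1 : (0:ℝ) < jr + 1 := by linarith
  have hD : (0:ℝ) < D := by linarith
  rw [div_le_iff₀ hD]
  have key : M ≤ M/(jr+1) * D := by
    rw [div_mul_eq_mul_div, le_div_iff₀ hj1]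
    nlinarith
  nlinarith

lemma prodA (M : ℝ) (hM : 1 ≤ M) (k : ℕ) (h : 2*M ≤ 3*k) :
    ∏ j ∈ Finset.range k, (M/((j:ℝ)+1)+3/2) ≤ ((3:ℝ)/2)^k * ((k:ℝ)+1)^k := by
  have h1 : ∏ j ∈ Finset.range k, (M/((j:ℝ)+1)+3/2) ≤
      ∏ _j ∈ Finset.range k, ((3:ℝ)/2 * ((k:ℝ)+1)) := by
    apply Finset.prod_le_prod
    · intro j _; positivity
    · intro j hj
      have hj1 : (1:ℝ) ≤ (j:ℝ)+1 := by
        have : (0:ℝ) ≤ (j:ℝ) := Nat.cast_nonneg j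
        linarith
      have : M/((j:ℝ)+1) ≤ M := by
        rw [div_le_iff₀ (by linarith)]
        nlinarith
      linarith
  calc ∏ j ∈ Finset.range k, (M/((j:ℝ)+1)+3/2) ≤ _ := h1
    _ = ((3:ℝ)/2 * ((k:ℝ)+1))^k := by rw [Finset.prod_const, Finset.card_range]
    _ = ((3:ℝ)/2)^k * ((k:ℝ)+1)^k := mul_pow _ _ _

lemma prodB (M : ℝ) (hM : 1 ≤ M) (k : ℕ) :
    ∏ j ∈ Finset.range k, (M/((j:ℝ)+1)+3/2) ≤
      M^k/(Nat.factorial k : ℝ) * Real.exp (3*((k:ℝ)*((k:ℝ)+1)/2)/(2*M)) := by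
  have hM0 : (0:ℝ) < M := by linarith
  have h1 : ∏ j ∈ Finset.range k, (M/((j:ℝ)+1)+3/2) ≤
      ∏ j ∈ Finset.range k, (M/((j:ℝ)+1) * Real.exp (3*((j:ℝ)+1)/(2*M))) := by
    apply Finset.prod_le_prod
    · intro j _; positivity
    · intro j _
      have hj1 : (0:ℝ) < (j:ℝ)+1 := by positivity
      have he : 3*((j:ℝ)+1)/(2*M) + 1 ≤ Real.exp (3*((j:ℝ)+1)/(2*M)) :=
        Real.add_one_le_exp _
      have h2 : M/((j:ℝ)+1) * (3*((j:ℝ)+1)/(2*M) + 1) = M/((j:ℝ)+1) + 3/2 := by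
        field_simp
        ring
      calc M/((j:ℝ)+1)+3/2 = M/((j:ℝ)+1) * (3*((j:ℝ)+1)/(2*M) + 1) := h2.symm
        _ ≤ M/((j:ℝ)+1) * Real.exp (3*((j:ℝ)+1)/(2*M)) := by
            apply mul_le_mul_of_nonneg_left he (by positivity)
  have h3 : ∏ j ∈ Finset.range k, (M/((j:ℝ)+1) * Real.exp (3*((j:ℝ)+1)/(2*M))) =
      M^k/(Nat.factorial k : ℝ) * Real.exp (3*((k:ℝ)*((k:ℝ)+1)/2)/(2*M)) := by
    rw [Finset.prod_mul_distrib, ← Real.exp_sum]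
    congr 1
    · rw [Finset.prod_div_distrib, Finset.prod_const, Finset.card_range, prod_range_add_one]
    · congr 1
      have : ∑ j ∈ Finset.range k, 3*((j:ℝ)+1)/(2*M) =
          3*(∑ j ∈ Finset.range k, ((j:ℝ)+1))/(2*M) := by
        rw [Finset.mul_sum, Finset.sum_div]
      rw [this, sum_range_add_one]
  rw [h3] at h1
  exact h1

lemma kpow_le (k : ℕ) : (k:ℝ)^k ≤ Real.exp 1 ^ k * (Nat.factorial k : ℝ) := by
  calc (k:ℝ)^k ≤ ((k:ℝ)+1)^k := by
        apply pow_le_pow_left₀ (Nat.cast_nonneg k)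
        linarith
    _ ≤ _ := pow_succ_le_exp_factorial k

lemma B2step3 (M Y : ℝ) (hM : 1 ≤ M) (hY0 : 0 < Y) (k : ℕ) (hk1R : (1:ℝ) ≤ (k:ℝ))
    (hMY : M * Y * (Real.exp 1)^2 ≤ (k:ℝ)^2 / 2) :
    M^k * Y^k / ((Nat.factorial k : ℝ))^2 ≤ ((1:ℝ)/2)^k := by
  have hMY' : M*Y ≤ (k:ℝ)^2/(2*(Real.exp 1)^2) := by
    rw [le_div_iff₀ (by positivity)]
    calc M*Y*(2*(Real.exp 1)^2) = (M*Y*(Real.exp 1)^2)*2 := by ring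
      _ ≤ ((k:ℝ)^2/2)*2 := by linarith
      _ = (k:ℝ)^2 := by ring
  have hpow : (M*Y)^k ≤ ((k:ℝ)^2/(2*(Real.exp 1)^2))^k :=
    pow_le_pow_left₀ (by positivity) hMY' k
  have hmp : M^k * Y^k = (M*Y)^k := (mul_pow M Y k).symm
  rw [hmp, div_le_iff₀ (by positivity : (0:ℝ) < ((Nat.factorial k : ℝ))^2)]
  calc (M*Y)^k ≤ ((k:ℝ)^2/(2*(Real.exp 1)^2))^k := hpow
    _ = ((k:ℝ)^k)^2 / (2^k * (Real.exp 1^k)^2) := by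
        rw [div_pow, mul_pow]
        ring
    _ ≤ ((Real.exp 1^k)*(Nat.factorial k : ℝ))^2 / (2^k * (Real.exp 1^k)^2) := by
        gcongr
        exact kpow_le k
    _ = ((1:ℝ)/2)^k * ((Nat.factorial k : ℝ))^2 := by
        rw [div_eq_iff (by positivity)]
        have h12 : ((1:ℝ)/2)^k * 2^k = 1 := by rw [← mul_pow]; norm_num
        linear_combination (-((Nat.factorial k : ℝ)^2 * (Real.exp 1^k)^2)) * h12

set_option maxHeartbeats 1000000 in
lemma case_bound (M Y : ℝ) (hM : 1 ≤ M) (hY0 : 0 < Y) (hY : Y ≤ 1/(2*Real.exp 2)) (k : ℕ) :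
    (∏ j ∈ Finset.range k, (M/((j:ℝ)+1)+3/2)) * Y^k / (Nat.factorial k : ℝ) ≤
      Real.exp 2 * (M^k * Y^k / ((Nat.factorial k : ℝ))^2) + (3/(4*Real.exp 1))^k
        + Real.exp 1 * (Real.exp (1/2)/2)^k := by
  have hexp2 : Real.exp 2 = Real.exp 1 * Real.exp 1 := by
    rw [← Real.exp_add]; norm_num
  have he1 : (0:ℝ) < Real.exp 1 := Real.exp_pos 1
  have hfac : (0:ℝ) < (Nat.factorial k : ℝ) := by
    exact_mod_cast Nat.factorial_pos k
  have hterm2 : (0:ℝ) ≤ (3/(4*Real.exp 1))^k := by positivity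
  have hterm3 : (0:ℝ) ≤ Real.exp 1 * (Real.exp (1/2)/2)^k := by positivity
  have hterm1 : (0:ℝ) ≤ Real.exp 2 * (M^k * Y^k / ((Nat.factorial k : ℝ))^2) := by positivity
  have hY2 : Y * (2*Real.exp 2) ≤ 1 := by
    rw [← le_div_iff₀ (by positivity)]
    exact hY
  rcases le_or_gt (2*M) (3*(k:ℝ)) with hA | hB
  · -- Case A
    have hP := prodA M hM k hA
    have step1 : (∏ j ∈ Finset.range k, (M/((j:ℝ)+1)+3/2)) * Y^k / (Nat.factorial k : ℝ) ≤
        ((3:ℝ)/2)^k * ((k:ℝ)+1)^k * Y^k / (Nat.factorial k : ℝ) := by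
      gcongr
    have step2 : ((3:ℝ)/2)^k * ((k:ℝ)+1)^k * Y^k / (Nat.factorial k : ℝ) ≤
        ((3:ℝ)/2)^k * (Real.exp 1 ^ k * (Nat.factorial k : ℝ)) * Y^k / (Nat.factorial k : ℝ) := by
      gcongr
      exact pow_succ_le_exp_factorial k
    have step3 : ((3:ℝ)/2)^k * (Real.exp 1 ^ k * (Nat.factorial k : ℝ)) * Y^k / (Nat.factorial k : ℝ)
        = (3*Real.exp 1*Y/2)^k := by
      field_simp
      ring
    have hbase : 3*Real.exp 1*Y/2 ≤ 3/(4*Real.exp 1) := by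
      rw [div_le_div_iff₀ (by norm_num) (by positivity)]
      nlinarith [hY2, hexp2, he1.le, hY0.le]
    have step4 : (3*Real.exp 1*Y/2)^k ≤ (3/(4*Real.exp 1))^k := by
      apply pow_le_pow_left₀ (by positivity) hbase
    linarith
  · -- Case B
    have hP := prodB M hM k
    have hM0 : (0:ℝ) < M := by linarith
    have hE : 3*((k:ℝ)*((k:ℝ)+1)/2)/(2*M) = 3*(k:ℝ)*((k:ℝ)+1)/(4*M) := by ring
    have step1 : (∏ j ∈ Finset.range k, (M/((j:ℝ)+1)+3/2)) * Y^k / (Nat.factorial k : ℝ) ≤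
        (M^k/(Nat.factorial k : ℝ) * Real.exp (3*(k:ℝ)*((k:ℝ)+1)/(4*M))) * Y^k /
          (Nat.factorial k : ℝ) := by
      rw [← hE]
      gcongr
    rcases le_or_gt ((k:ℝ)^2) M with hB1 | hB2
    · -- B1 : k² ≤ M
      have hkk : (k:ℝ) ≤ (k:ℝ)^2 := by
        rcases Nat.eq_zero_or_pos k with h0 | h1
        · subst h0; norm_num
        · have : (1:ℝ) ≤ (k:ℝ) := by exact_mod_cast h1
          nlinarith
      have hEle : 3*(k:ℝ)*((k:ℝ)+1)/(4*M) ≤ 2 := by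
        rw [div_le_iff₀ (by positivity)]
        nlinarith
      have step2 : (M^k/(Nat.factorial k : ℝ) * Real.exp (3*(k:ℝ)*((k:ℝ)+1)/(4*M))) * Y^k /
            (Nat.factorial k : ℝ) ≤
          (M^k/(Nat.factorial k : ℝ) * Real.exp 2) * Y^k / (Nat.factorial k : ℝ) := by
        gcongr
      have step3 : (M^k/(Nat.factorial k : ℝ) * Real.exp 2) * Y^k / (Nat.factorial k : ℝ)
          = Real.exp 2 * (M^k * Y^k / ((Nat.factorial k : ℝ))^2) := by
        field_simp
      linarith
    · -- B2 : M < k²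
      have hk1 : 1 ≤ k := by
        by_contra h
        push_neg at h
        interval_cases k
        simp at hB2
        linarith
      have hk1R : (1:ℝ) ≤ (k:ℝ) := by exact_mod_cast hk1
      have hEle : 3*(k:ℝ)*((k:ℝ)+1)/(4*M) ≤ ((k:ℝ)+1)/2 := by
        rw [div_le_div_iff₀ (by positivity) (by norm_num)]
        nlinarith
      have step2 : (M^k/(Nat.factorial k : ℝ) * Real.exp (3*(k:ℝ)*((k:ℝ)+1)/(4*M))) * Y^k /
            (Nat.factorial k : ℝ) ≤
          (M^k * Y^k / ((Nat.factorial k : ℝ))^2) * Real.exp (((k:ℝ)+1)/2) := by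
        have h1 : (M^k/(Nat.factorial k : ℝ) * Real.exp (3*(k:ℝ)*((k:ℝ)+1)/(4*M))) * Y^k /
            (Nat.factorial k : ℝ) = (M^k * Y^k / ((Nat.factorial k : ℝ))^2) *
              Real.exp (3*(k:ℝ)*((k:ℝ)+1)/(4*M)) := by
          field_simp
        rw [h1]
        gcongr
      have hMY : M * Y * (Real.exp 1)^2 ≤ (k:ℝ)^2 / 2 := by
        have h2 : M * Y ≤ M / (2 * Real.exp 2) := by
          calc M * Y ≤ M * (1/(2*Real.exp 2)) := by
                apply mul_le_mul_of_nonneg_left hY (by linarith)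
            _ = M / (2*Real.exp 2) := by ring
        have h3 : M / (2 * Real.exp 2) * (Real.exp 1)^2 = M / 2 := by
          have he : (Real.exp 1)^2 = Real.exp 2 := by rw [hexp2]; ring
          rw [he]
          have h0 : Real.exp 2 ≠ 0 := (Real.exp_pos 2).ne'
          field_simp
        have h4 : M * Y * (Real.exp 1)^2 ≤ M / 2 := by
          calc M * Y * (Real.exp 1)^2 ≤ M / (2 * Real.exp 2) * (Real.exp 1)^2 := by
                apply mul_le_mul_of_nonneg_right h2 (by positivity)
            _ = M / 2 := h3
        linarith
      have step3 : M^k * Y^k / ((Nat.factorial k : ℝ))^2 ≤ ((1:ℝ)/2)^k :=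
        B2step3 M Y hM hY0 k hk1R hMY
      have hsplit : Real.exp (((k:ℝ)+1)/2) = Real.exp (1/2) * Real.exp (1/2)^k := by
        rw [← Real.exp_nat_mul, ← Real.exp_add]
        congr 1
        push_cast
        ring
      have step4 : (M^k * Y^k / ((Nat.factorial k : ℝ))^2) * Real.exp (((k:ℝ)+1)/2) ≤
          ((1:ℝ)/2)^k * Real.exp (((k:ℝ)+1)/2) := by
        apply mul_le_mul_of_nonneg_right step3 (by positivity)
      have step5 : ((1:ℝ)/2)^k * Real.exp (((k:ℝ)+1)/2) =
          Real.exp (1/2) * (Real.exp (1/2)/2)^k := by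
        rw [hsplit, div_pow, div_pow]
        field_simp
        simp
      have step6 : Real.exp (1/2) * (Real.exp (1/2)/2)^k ≤
          Real.exp 1 * (Real.exp (1/2)/2)^k := by
        apply mul_le_mul_of_nonneg_right _ (by positivity)
        exact Real.exp_le_exp.mpr (by norm_num)
      linarith


/-- There is an absolute constant `C` such that for every even integer `n`, every real `t` with
`|t| ≥ 1`, and every real `0 < Y < 1/(2e²)`,
`∑_{k≥0} |Γ(1/2−it−n/2+k)Γ(1−2it)/(Γ(1/2−it−n/2)Γ(1−2it+k))| · Y^k/k!
  ≤ C ∑_{k≥0} (|n|/2+1)^k Y^k/(k!)²`. -/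
theorem stmt13 :
    ∃ C : ℝ, ∀ n : ℤ, Even n → ∀ t : ℝ, 1 ≤ |t| → ∀ Y : ℝ, 0 < Y → Y < 1 / (2 * Real.exp 2) →
      (∑' k : ℕ,
          norm
            (Complex.Gamma ((1 : ℂ) / 2 - Complex.I * (t : ℂ) - (n : ℂ) / 2 + (k : ℂ)) *
                Complex.Gamma (1 - 2 * Complex.I * (t : ℂ)) /
              (Complex.Gamma ((1 : ℂ) / 2 - Complex.I * (t : ℂ) - (n : ℂ) / 2) *
                Complex.Gamma (1 - 2 * Complex.I * (t : ℂ) + (k : ℂ)))) *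
            Y ^ k / (Nat.factorial k : ℝ)) ≤
        C * ∑' k : ℕ, (|(n : ℝ)| / 2 + 1) ^ k * Y ^ k / ((Nat.factorial k : ℝ)) ^ 2 := by
  have he1 : (0:ℝ) < Real.exp 1 := Real.exp_pos 1
  set r1 : ℝ := 3/(4*Real.exp 1) with hr1def
  set r2 : ℝ := Real.exp (1/2)/2 with hr2def
  have hr1a : 0 ≤ r1 := by positivity
  have hr1b : r1 < 1 := by
    rw [hr1def, div_lt_one (by positivity)]
    nlinarith [Real.exp_one_gt_d9]
  have hr2a : 0 ≤ r2 := by positivity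
  have hr2b : r2 < 1 := by
    rw [hr2def, div_lt_one (by norm_num)]
    have hsq : Real.exp (1/2) * Real.exp (1/2) = Real.exp 1 := by
      rw [← Real.exp_add]; norm_num
    nlinarith [Real.exp_pos (1/2), Real.exp_one_lt_d9]
  refine ⟨Real.exp 2 + (1 - r1)⁻¹ + Real.exp 1 * (1 - r2)⁻¹, ?_⟩
  intro n _hn t ht Y hY0 hYlt
  have hY : Y ≤ 1/(2*Real.exp 2) := le_of_lt hYlt
  set M : ℝ := |(n:ℝ)|/2 + 1 with hMdef
  have hM : 1 ≤ M := by
    have : (0:ℝ) ≤ |(n:ℝ)| := abs_nonneg _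
    rw [hMdef]; linarith
  have ht0 : t ≠ 0 := by
    intro h; rw [h] at ht; simp at ht; linarith
  set a : ℂ := (1 : ℂ) / 2 - Complex.I * (t : ℂ) - (n : ℂ) / 2 with hadef
  set b : ℂ := 1 - 2 * Complex.I * (t : ℂ) with hbdef
  have haim : a.im = -t := by rw [hadef]; simp
  have hbim : b.im = -(2*t) := by rw [hbdef]; simp
  have haim0 : a.im ≠ 0 := by rw [haim]; simpa using ht0
  have hbim0 : b.im ≠ 0 := by rw [hbim]; simpa using ht0
  set f : ℕ → ℝ := fun k => norm (Complex.Gamma (a + (k:ℂ)) * Complex.Gamma b /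
      (Complex.Gamma a * Complex.Gamma (b + (k:ℂ)))) * Y ^ k / (Nat.factorial k : ℝ) with hfdef
  set g : ℕ → ℝ := fun k => Real.exp 2 * (M^k * Y^k / ((Nat.factorial k : ℝ))^2) + r1^k
      + Real.exp 1 * r2^k with hgdef
  set h : ℕ → ℝ := fun k => M^k * Y^k / ((Nat.factorial k : ℝ))^2 with hhdef
  -- pointwise bound f ≤ g
  have hfg : ∀ k, f k ≤ g k := by
    intro k
    have habs : norm (Complex.Gamma (a + (k:ℂ)) * Complex.Gamma b /
        (Complex.Gamma a * Complex.Gamma (b + (k:ℂ)))) =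
        ∏ j ∈ Finset.range k, (norm (a + (j:ℂ)) / norm (b + (j:ℂ))) :=
      abs_gamma_quot a b haim0 hbim0 k
    have hprod : ∏ j ∈ Finset.range k, (norm (a + (j:ℂ)) / norm (b + (j:ℂ))) ≤
        ∏ j ∈ Finset.range k, (M/((j:ℝ)+1)+3/2) := by
      apply Finset.prod_le_prod
      · intro j _; positivity
      · intro j _
        have hre : (a + (j:ℂ)).re = 1/2 - (n:ℝ)/2 + j := by rw [hadef]; simp
        have him : (a + (j:ℂ)).im = -t := by rw [hadef]; simp
        have hbre : (b + (j:ℂ)).re = 1 + j := by rw [hbdef]; simp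
        have hbim' : (b + (j:ℂ)).im = -(2*t) := by rw [hbdef]; simp
        apply div_factor _ _ M |t| (j:ℝ) _ _ _ ht hM (Nat.cast_nonneg j)
        · -- abs (a+j) ≤ M + j + |t|
          have h1 := Complex.norm_le_abs_re_add_abs_im (a + (j:ℂ))
          rw [hre, him, abs_neg] at h1
          have h2 : |1/2 - (n:ℝ)/2 + j| ≤ M + j := by
            have h3 := le_abs_self (n:ℝ)
            have h4 := neg_abs_le (n:ℝ)
            have h5 : (0:ℝ) ≤ j := Nat.cast_nonneg j
            rw [abs_le]
            constructor <;> rw [hMdef] <;> push_cast <;> linarith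
          calc norm (a + (j:ℂ)) ≤ |1/2 - (n:ℝ)/2 + j| + |t| := h1
            _ ≤ M + j + |t| := by linarith
        · -- j + 1 ≤ abs (b+j)
          have h1 := Complex.abs_re_le_norm (b + (j:ℂ))
          rw [hbre] at h1
          have h2 : |1 + (j:ℝ)| = 1 + j := abs_of_pos (by positivity)
          rw [h2] at h1
          linarith
        · -- 2|t| ≤ abs (b+j)
          have h1 := Complex.abs_im_le_norm (b + (j:ℂ))
          rw [hbim'] at h1
          rw [abs_neg, abs_mul] at h1
          have : |(2:ℝ)| = 2 := by norm_num
          rw [this] at h1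
          linarith
    have hstep : f k ≤ (∏ j ∈ Finset.range k, (M/((j:ℝ)+1)+3/2)) * Y^k /
        (Nat.factorial k : ℝ) := by
      rw [hfdef]
      simp only
      rw [habs]
      gcongr
    calc f k ≤ _ := hstep
      _ ≤ _ := case_bound M Y hM hY0 hY k
  have hf0 : ∀ k, 0 ≤ f k := by
    intro k
    rw [hfdef]
    positivity
  have hh0 : ∀ k, 0 ≤ h k := by
    intro k; rw [hhdef]; positivity
  -- summability
  have hsumh : Summable h := by
    apply Summable.of_nonneg_of_le hh0 _ (Real.summable_pow_div_factorial (M*Y))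
    intro k
    rw [hhdef]
    simp only
    have hfk : (1:ℝ) ≤ (Nat.factorial k : ℝ) := by exact_mod_cast Nat.one_le_iff_ne_zero.mpr (Nat.factorial_ne_zero k)
    have : ((Nat.factorial k : ℝ)) ≤ ((Nat.factorial k : ℝ))^2 := by nlinarith
    rw [mul_pow]
    gcongr
  have hsumg1 : Summable (fun k => Real.exp 2 * h k) := hsumh.mul_left _
  have hsumg2 : Summable (fun k : ℕ => r1^k) := summable_geometric_of_lt_one hr1a hr1b
  have hsumg3' : Summable (fun k : ℕ => r2^k) := summable_geometric_of_lt_one hr2a hr2b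
  have hsumg3 : Summable (fun k : ℕ => Real.exp 1 * r2^k) := hsumg3'.mul_left _
  have hsumg : Summable g := by
    rw [hgdef]
    exact ((hsumg1.add hsumg2).add hsumg3)
  have hsumf : Summable f := Summable.of_nonneg_of_le hf0 hfg hsumg
  -- tsum comparison
  have h1 : (∑' k, f k) ≤ ∑' k, g k := Summable.tsum_le_tsum hfg hsumf hsumg
  have h2 : (∑' k, g k) = Real.exp 2 * (∑' k, h k) + (1-r1)⁻¹ + Real.exp 1 * (1-r2)⁻¹ := by
    rw [hgdef]
    rw [Summable.tsum_add (hsumg1.add hsumg2) hsumg3, Summable.tsum_add hsumg1 hsumg2]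
    rw [tsum_mul_left, tsum_mul_left, tsum_geometric_of_lt_one hr1a hr1b,
      tsum_geometric_of_lt_one hr2a hr2b]
  have hS1 : (1:ℝ) ≤ ∑' k, h k := by
    have := Summable.le_tsum hsumh 0 (fun j _ => hh0 j)
    rw [hhdef] at this
    simpa using this
  have hc2 : (0:ℝ) ≤ (1-r1)⁻¹ := by
    rw [inv_nonneg]; linarith
  have hc3 : (0:ℝ) ≤ Real.exp 1 * (1-r2)⁻¹ := by
    apply mul_nonneg he1.le
    rw [inv_nonneg]; linarith
  have hfinal : Real.exp 2 * (∑' k, h k) + (1-r1)⁻¹ + Real.exp 1 * (1-r2)⁻¹ ≤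
      (Real.exp 2 + (1 - r1)⁻¹ + Real.exp 1 * (1 - r2)⁻¹) * (∑' k, h k) := by
    nlinarith [hS1, hc2, hc3]
  calc (∑' k, f k) ≤ ∑' k, g k := h1
    _ = _ := h2
    _ ≤ _ := hfinal
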